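/- Any set of vertices in geodesic mutual visibility in the grid graph G_{M,N} has size at most 2·min{M,N}. -/

import Mathlib

/-- The `M × N` grid graph: vertices `{1,…,M} × {1,…,N}` (modeled as
`Fin M × Fin N`), edges between vertices at L1-distance 1. -/
def gridGraph (M N : ℕ) : SimpleGraph (Fin M × Fin N) where
  Adj a b := Nat.dist (a.1 : ℕ) (b.1 : ℕ) + Nat.dist (a.2 : ℕ) (b.2 : ℕ) = 1
  symm := by
    constructor
    intro a b h
    simpa [Nat.dist_comm] using h
  loopless := by
    constructor
    intro a h
    simp [Nat.dist_self] at h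

/-- Geodesic mutual visibility of a set `S` of vertices. -/
def gmv {V : Type*} (G : SimpleGraph V) (S : Finset V) : Prop :=
  ∀ u ∈ S, ∀ v ∈ S, u ≠ v →
    ∃ p : G.Walk u v, p.length = G.dist u v ∧
      ∀ w ∈ p.support, w ∈ S → w = u ∨ w = v

lemma grid_adj {M N : ℕ} {a b : Fin M × Fin N} (h : (gridGraph M N).Adj a b) :
    Nat.dist (a.1 : ℕ) (b.1 : ℕ) + Nat.dist (a.2 : ℕ) (b.2 : ℕ) = 1 := h

/-- Lower bound on walk length by second-coordinate distance. -/
lemma walk_len_lb₂ {M N : ℕ} {x y : Fin M × Fin N} (p : (gridGraph M N).Walk x y) :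
    Nat.dist (x.2 : ℕ) (y.2 : ℕ) ≤ p.length := by
  induction p with
  | nil => simp [Nat.dist_self]
  | @cons u b y h q ih =>
    have h' := grid_adj h
    simp only [SimpleGraph.Walk.length_cons]
    simp only [Nat.dist] at *
    omega

/-- Lower bound on walk length by first-coordinate distance. -/
lemma walk_len_lb₁ {M N : ℕ} {x y : Fin M × Fin N} (p : (gridGraph M N).Walk x y) :
    Nat.dist (x.1 : ℕ) (y.1 : ℕ) ≤ p.length := by
  induction p with
  | nil => simp [Nat.dist_self]
  | @cons u b y h q ih =>
    have h' := grid_adj h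
    simp only [SimpleGraph.Walk.length_cons]
    simp only [Nat.dist] at *
    omega

/-- A walk whose length achieves the second-coordinate distance stays in the
row of its start and visits every intermediate column value. -/
lemma walk_row {M N : ℕ} : ∀ {x y : Fin M × Fin N} (p : (gridGraph M N).Walk x y),
    p.length = Nat.dist (x.2 : ℕ) (y.2 : ℕ) →
    ∀ m : ℕ, (x.2 : ℕ) ≤ m → m ≤ (y.2 : ℕ) →
    ∃ z ∈ p.support, z.1 = x.1 ∧ (z.2 : ℕ) = m := by
  intro x y p
  induction p with
  | nil =>
    rename_i v
    intro hl m hm1 hm2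
    refine ⟨v, by simp, rfl, by omega⟩
  | @cons u b y h q ih =>
    intro hl m hm1 hm2
    have h' := grid_adj h
    have lb := walk_len_lb₂ q
    simp only [SimpleGraph.Walk.length_cons] at hl
    have hq : q.length = Nat.dist (b.2 : ℕ) (y.2 : ℕ) := by
      simp only [Nat.dist] at *; omega
    have hub : (u.1 : ℕ) = (b.1 : ℕ) := by
      simp only [Nat.dist] at *; omega
    have hub' : u.1 = b.1 := Fin.ext hub
    by_cases hm : m = (u.2 : ℕ)
    · exact ⟨u, by simp, rfl, hm.symm⟩
    · have hm1' : (b.2 : ℕ) ≤ m := by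
        simp only [Nat.dist] at *; omega
      obtain ⟨z, hz, hz1, hz2⟩ := ih hq m hm1' hm2
      exact ⟨z, by simp [hz], by rw [hz1, hub'], hz2⟩

/-- Analogue for columns. -/
lemma walk_col {M N : ℕ} : ∀ {x y : Fin M × Fin N} (p : (gridGraph M N).Walk x y),
    p.length = Nat.dist (x.1 : ℕ) (y.1 : ℕ) →
    ∀ m : ℕ, (x.1 : ℕ) ≤ m → m ≤ (y.1 : ℕ) →
    ∃ z ∈ p.support, z.2 = x.2 ∧ (z.1 : ℕ) = m := by
  intro x y p
  induction p with
  | nil =>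
    rename_i v
    intro hl m hm1 hm2
    refine ⟨v, by simp, rfl, by omega⟩
  | @cons u b y h q ih =>
    intro hl m hm1 hm2
    have h' := grid_adj h
    have lb := walk_len_lb₁ q
    simp only [SimpleGraph.Walk.length_cons] at hl
    have hq : q.length = Nat.dist (b.1 : ℕ) (y.1 : ℕ) := by
      simp only [Nat.dist] at *; omega
    have hub : (u.2 : ℕ) = (b.2 : ℕ) := by
      simp only [Nat.dist] at *; omega
    have hub' : u.2 = b.2 := Fin.ext hub
    by_cases hm : m = (u.1 : ℕ)
    · exact ⟨u, by simp, rfl, hm.symm⟩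
    · have hm1' : (b.1 : ℕ) ≤ m := by
        simp only [Nat.dist] at *; omega
      obtain ⟨z, hz, hz1, hz2⟩ := ih hq m hm1' hm2
      exact ⟨z, by simp [hz], by rw [hz1, hub'], hz2⟩

/-- Straight walk along a row. -/
lemma rowWalk {M N : ℕ} (r : Fin M) : ∀ (k : ℕ) (a b : Fin N), (b : ℕ) = (a : ℕ) + k →
    ∃ p : (gridGraph M N).Walk (r, a) (r, b), p.length = k := by
  intro k
  induction k with
  | zero =>
    intro a b hb
    have : a = b := Fin.ext (by omega)
    subst this
    exact ⟨SimpleGraph.Walk.nil, rfl⟩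
  | succ k ih =>
    intro a b hb
    have ha1 : (a : ℕ) + 1 < N := by have := b.isLt; omega
    set a' : Fin N := ⟨(a : ℕ) + 1, ha1⟩ with ha'
    have hadj : (gridGraph M N).Adj (r, a) (r, a') := by
      show Nat.dist (r : ℕ) (r : ℕ) + Nat.dist (a : ℕ) ((a : ℕ) + 1) = 1
      simp [Nat.dist]
    obtain ⟨q, hq⟩ := ih a' b (by simp [ha']; omega)
    exact ⟨SimpleGraph.Walk.cons hadj q, by simp [hq]⟩

/-- Straight walk along a column. -/
lemma colWalk {M N : ℕ} (c : Fin N) : ∀ (k : ℕ) (a b : Fin M), (b : ℕ) = (a : ℕ) + k →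
    ∃ p : (gridGraph M N).Walk (a, c) (b, c), p.length = k := by
  intro k
  induction k with
  | zero =>
    intro a b hb
    have : a = b := Fin.ext (by omega)
    subst this
    exact ⟨SimpleGraph.Walk.nil, rfl⟩
  | succ k ih =>
    intro a b hb
    have ha1 : (a : ℕ) + 1 < M := by have := b.isLt; omega
    set a' : Fin M := ⟨(a : ℕ) + 1, ha1⟩ with ha'
    have hadj : (gridGraph M N).Adj (a, c) (a', c) := by
      show Nat.dist (a : ℕ) ((a : ℕ) + 1) + Nat.dist (c : ℕ) (c : ℕ) = 1
      simp [Nat.dist]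
    obtain ⟨q, hq⟩ := ih a' b (by simp [ha']; omega)
    exact ⟨SimpleGraph.Walk.cons hadj q, by simp [hq]⟩

/-- Distance bound within a row. -/
lemma dist_row_le {M N : ℕ} (r : Fin M) (a b : Fin N) :
    (gridGraph M N).dist (r, a) (r, b) ≤ Nat.dist (a : ℕ) (b : ℕ) := by
  rcases le_total (a : ℕ) (b : ℕ) with hle | hle
  · obtain ⟨p, hp⟩ := rowWalk r ((b : ℕ) - (a : ℕ)) a b (by omega)
    have := SimpleGraph.dist_le p
    simp only [Nat.dist] at *; omega
  · obtain ⟨p, hp⟩ := rowWalk r ((a : ℕ) - (b : ℕ)) b a (by omega)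
    have := SimpleGraph.dist_le p.reverse
    simp only [SimpleGraph.Walk.length_reverse, Nat.dist] at *; omega

/-- Distance bound within a column. -/
lemma dist_col_le {M N : ℕ} (c : Fin N) (a b : Fin M) :
    (gridGraph M N).dist (a, c) (b, c) ≤ Nat.dist (a : ℕ) (b : ℕ) := by
  rcases le_total (a : ℕ) (b : ℕ) with hle | hle
  · obtain ⟨p, hp⟩ := colWalk c ((b : ℕ) - (a : ℕ)) a b (by omega)
    have := SimpleGraph.dist_le p
    simp only [Nat.dist] at *; omega
  · obtain ⟨p, hp⟩ := colWalk c ((a : ℕ) - (b : ℕ)) b a (by omega)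
    have := SimpleGraph.dist_le p.reverse
    simp only [SimpleGraph.Walk.length_reverse, Nat.dist] at *; omega

/-- No three points of a gmv set in one row. -/
lemma no3row {M N : ℕ} {S : Finset (Fin M × Fin N)} (h : gmv (gridGraph M N) S)
    {r : Fin M} {a b c : Fin N} (ha : (r, a) ∈ S) (hb : (r, b) ∈ S) (hc : (r, c) ∈ S)
    (h1 : (a : ℕ) < (b : ℕ)) (h2 : (b : ℕ) < (c : ℕ)) : False := by
  have hne : (r, a) ≠ (r, c) := by
    intro he
    have : a = c := congrArg Prod.snd he
    simp [this] at h1; omega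
  obtain ⟨p, hlen, hint⟩ := h (r, a) ha (r, c) hc hne
  have lb : Nat.dist (a : ℕ) (c : ℕ) ≤ p.length := walk_len_lb₂ p
  have ub := dist_row_le r a c
  have hpl : p.length = Nat.dist (a : ℕ) (c : ℕ) := by omega
  obtain ⟨z, hzmem, hz1, hz2⟩ := walk_row p hpl (b : ℕ) (le_of_lt h1) (le_of_lt h2)
  have hz : z = (r, b) := by
    have : z.2 = b := Fin.ext hz2
    exact Prod.ext hz1 this
  rcases hint z hzmem (hz ▸ hb) with he | he <;> rw [hz] at he
  · have : b = a := congrArg Prod.snd he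
    simp [this] at h1
  · have : b = c := congrArg Prod.snd he
    simp [this] at h2

/-- No three points of a gmv set in one column. -/
lemma no3col {M N : ℕ} {S : Finset (Fin M × Fin N)} (h : gmv (gridGraph M N) S)
    {r : Fin N} {a b c : Fin M} (ha : (a, r) ∈ S) (hb : (b, r) ∈ S) (hc : (c, r) ∈ S)
    (h1 : (a : ℕ) < (b : ℕ)) (h2 : (b : ℕ) < (c : ℕ)) : False := by
  have hne : (a, r) ≠ (c, r) := by
    intro he
    have : a = c := congrArg Prod.fst he
    simp [this] at h1; omega
  obtain ⟨p, hlen, hint⟩ := h (a, r) ha (c, r) hc hne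
  have lb : Nat.dist (a : ℕ) (c : ℕ) ≤ p.length := walk_len_lb₁ p
  have ub := dist_col_le r a c
  have hpl : p.length = Nat.dist (a : ℕ) (c : ℕ) := by omega
  obtain ⟨z, hzmem, hz1, hz2⟩ := walk_col p hpl (b : ℕ) (le_of_lt h1) (le_of_lt h2)
  have hz : z = (b, r) := by
    have : z.1 = b := Fin.ext hz2
    exact Prod.ext this hz1
  rcases hint z hzmem (hz ▸ hb) with he | he <;> rw [hz] at he
  · have : b = a := congrArg Prod.fst he
    simp [this] at h1
  · have : b = c := congrArg Prod.fst he
    simp [this] at h2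

/-- At most two points of a gmv set per row. -/
lemma row_fiber_le {M N : ℕ} {S : Finset (Fin M × Fin N)} (h : gmv (gridGraph M N) S)
    (r : Fin M) : (S.filter fun x => x.1 = r).card ≤ 2 := by
  by_contra hcon
  push_neg at hcon
  obtain ⟨u, hu, v, hv, w, hw, huv, huw, hvw⟩ := Finset.two_lt_card.mp hcon
  simp only [Finset.mem_filter] at hu hv hw
  obtain ⟨hu, hu1⟩ := hu; obtain ⟨hv, hv1⟩ := hv; obtain ⟨hw, hw1⟩ := hw
  have eu : u = (r, u.2) := by rw [← hu1]
  have ev : v = (r, v.2) := by rw [← hv1]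
  have ew : w = (r, w.2) := by rw [← hw1]
  rw [eu] at hu huv huw; rw [ev] at hv huv hvw; rw [ew] at hw huw hvw
  have duv : (u.2 : ℕ) ≠ (v.2 : ℕ) := fun he => huv (by rw [Fin.ext he])
  have duw : (u.2 : ℕ) ≠ (w.2 : ℕ) := fun he => huw (by rw [Fin.ext he])
  have dvw : (v.2 : ℕ) ≠ (w.2 : ℕ) := fun he => hvw (by rw [Fin.ext he])
  rcases Nat.lt_trichotomy (u.2 : ℕ) (v.2 : ℕ) with h1 | h1 | h1
  · rcases Nat.lt_trichotomy (v.2 : ℕ) (w.2 : ℕ) with h2 | h2 | h2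
    · exact no3row h hu hv hw h1 h2
    · exact dvw h2
    · rcases Nat.lt_trichotomy (u.2 : ℕ) (w.2 : ℕ) with h3 | h3 | h3
      · exact no3row h hu hw hv h3 h2
      · exact duw h3
      · exact no3row h hw hu hv h3 h1
  · exact duv h1
  · rcases Nat.lt_trichotomy (u.2 : ℕ) (w.2 : ℕ) with h2 | h2 | h2
    · exact no3row h hv hu hw h1 h2
    · exact duw h2
    · rcases Nat.lt_trichotomy (v.2 : ℕ) (w.2 : ℕ) with h3 | h3 | h3
      · exact no3row h hv hw hu h3 h2
      · exact dvw h3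
      · exact no3row h hw hv hu h3 h1

/-- At most two points of a gmv set per column. -/
lemma col_fiber_le {M N : ℕ} {S : Finset (Fin M × Fin N)} (h : gmv (gridGraph M N) S)
    (r : Fin N) : (S.filter fun x => x.2 = r).card ≤ 2 := by
  by_contra hcon
  push_neg at hcon
  obtain ⟨u, hu, v, hv, w, hw, huv, huw, hvw⟩ := Finset.two_lt_card.mp hcon
  simp only [Finset.mem_filter] at hu hv hw
  obtain ⟨hu, hu1⟩ := hu; obtain ⟨hv, hv1⟩ := hv; obtain ⟨hw, hw1⟩ := hw
  have eu : u = (u.1, r) := by rw [← hu1]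
  have ev : v = (v.1, r) := by rw [← hv1]
  have ew : w = (w.1, r) := by rw [← hw1]
  rw [eu] at hu huv huw; rw [ev] at hv huv hvw; rw [ew] at hw huw hvw
  have duv : (u.1 : ℕ) ≠ (v.1 : ℕ) := fun he => huv (by rw [Fin.ext he])
  have duw : (u.1 : ℕ) ≠ (w.1 : ℕ) := fun he => huw (by rw [Fin.ext he])
  have dvw : (v.1 : ℕ) ≠ (w.1 : ℕ) := fun he => hvw (by rw [Fin.ext he])
  rcases Nat.lt_trichotomy (u.1 : ℕ) (v.1 : ℕ) with h1 | h1 | h1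
  · rcases Nat.lt_trichotomy (v.1 : ℕ) (w.1 : ℕ) with h2 | h2 | h2
    · exact no3col h hu hv hw h1 h2
    · exact dvw h2
    · rcases Nat.lt_trichotomy (u.1 : ℕ) (w.1 : ℕ) with h3 | h3 | h3
      · exact no3col h hu hw hv h3 h2
      · exact duw h3
      · exact no3col h hw hu hv h3 h1
  · exact duv h1
  · rcases Nat.lt_trichotomy (u.1 : ℕ) (w.1 : ℕ) with h2 | h2 | h2
    · exact no3col h hv hu hw h1 h2
    · exact duw h2
    · rcases Nat.lt_trichotomy (v.1 : ℕ) (w.1 : ℕ) with h3 | h3 | h3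
      · exact no3col h hv hw hu h3 h2
      · exact dvw h3
      · exact no3col h hw hv hu h3 h1

/-- Any set in geodesic mutual visibility in the `M × N` grid graph has size
at most `2 * min M N`. -/
theorem stmt5 (M N : ℕ) (S : Finset (Fin M × Fin N))
    (h : gmv (gridGraph M N) S) :
    S.card ≤ 2 * min M N := by
  have hM : S.card ≤ 2 * M := by
    have heq : S.card = ∑ r : Fin M, (S.filter fun x => x.1 = r).card :=
      Finset.card_eq_sum_card_fiberwise (fun x _ => Finset.mem_univ x.1)
    calc S.card = ∑ r : Fin M, (S.filter fun x => x.1 = r).card := heq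
      _ ≤ ∑ _r : Fin M, 2 := Finset.sum_le_sum fun r _ => row_fiber_le h r
      _ = 2 * M := by simp [mul_comm]
  have hN : S.card ≤ 2 * N := by
    have heq : S.card = ∑ r : Fin N, (S.filter fun x => x.2 = r).card :=
      Finset.card_eq_sum_card_fiberwise (fun x _ => Finset.mem_univ x.2)
    calc S.card = ∑ r : Fin N, (S.filter fun x => x.2 = r).card := heq
      _ ≤ ∑ _r : Fin N, 2 := Finset.sum_le_sum fun r _ => col_fiber_le h r
      _ = 2 * N := by simp [mul_comm]
  omega
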